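/- For all j, k ∈ ℕ one has f₀ (z*)^j z^k f₀ = δ_{jk} · (∏_{i=1}^{k} (1 − q^{2i})) · f₀, where δ_{jk} is the Kronecker symbol. (This is the orthogonality of the vectors z^k f₀ in ℋ and the positivity of their squared lengths ∏_{i=1}^{k}(1 − q^{2i}), which underlies the positive definiteness of the scalar product on ℋ with (f₀, f₀) = 1 and (T_f ψ₁, ψ₂) = (ψ₁, T_{f*} ψ₂).) -/

import Mathlib

/-- Orthogonality of the vectors `z^k f₀` and positivity of their squared lengths:
`f₀ (z*)^j z^k f₀ = δ_{jk} (∏_{i=1}^{k} (1 - q^{2i})) f₀`. -/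
theorem f0_zstar_pow_z_pow_f0 {A : Type*} [Ring A] [Algebra ℂ A] [StarRing A]
    (q : ℝ) (hq0 : 0 < q) (hq1 : q < 1) (z f₀ : A)
    (hz : star z * z = ((q ^ 2 : ℝ) : ℂ) • (z * star z) + ((1 - q ^ 2 : ℝ) : ℂ) • (1 : A))
    (hf₀sq : f₀ * f₀ = f₀) (hf₀star : star f₀ = f₀)
    (hstarf₀ : star z * f₀ = 0) (hf₀z : f₀ * z = 0) :
    ∀ j k : ℕ,
      f₀ * ((star z) ^ j * z ^ k) * f₀ =
        if j = k then ((∏ i ∈ Finset.Icc 1 k, (1 - q ^ (2 * i)) : ℝ) : ℂ) • f₀ else 0 := by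
  -- commutation lemma
  have key : ∀ k : ℕ, star z * z ^ (k + 1) =
      ((q ^ (2 * (k + 1)) : ℝ) : ℂ) • (z ^ (k + 1) * star z)
        + ((1 - q ^ (2 * (k + 1)) : ℝ) : ℂ) • z ^ k := by
    intro k
    induction k with
    | zero =>
      simpa [pow_succ, mul_comm] using hz
    | succ n ih =>
      have : star z * z ^ (n + 1 + 1) = (star z * z ^ (n + 1)) * z := by
        rw [pow_succ, mul_assoc]
      rw [this, ih]
      rw [add_mul, smul_mul_assoc, smul_mul_assoc, mul_assoc, hz]
      simp only [mul_add, smul_add, mul_smul_comm, smul_smul, mul_one,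
        ← mul_assoc, ← pow_succ]
      push_cast
      module
  have hf₀zk : ∀ k : ℕ, f₀ * z ^ (k + 1) = 0 := by
    intro k
    rw [pow_succ', ← mul_assoc, hf₀z, zero_mul]
  have hzsf₀ : ∀ j : ℕ, (star z) ^ (j + 1) * f₀ = 0 := by
    intro j
    rw [pow_succ, mul_assoc, hstarf₀, mul_zero]
  intro j
  induction j with
  | zero =>
    intro k
    cases k with
    | zero => simp [hf₀sq]
    | succ n =>
      rw [pow_zero, one_mul, hf₀zk, zero_mul]
      simp
  | succ j ih =>
    intro k
    cases k with
    | zero =>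
      rw [pow_zero, mul_one, mul_assoc, hzsf₀, mul_zero]
      simp
    | succ n =>
      have h1 : (star z) ^ (j + 1) * z ^ (n + 1)
          = (star z) ^ j * (star z * z ^ (n + 1)) := by
        rw [pow_succ, mul_assoc]
      rw [h1, key n]
      simp only [mul_add, add_mul, mul_smul_comm, smul_mul_assoc]
      have h2 : f₀ * (star z ^ j * (z ^ (n + 1) * star z)) * f₀ = 0 := by
        rw [mul_assoc, mul_assoc, mul_assoc, hstarf₀, mul_zero, mul_zero, mul_zero]
      rw [h2, smul_zero, zero_add, ih n]
      by_cases hjk : j = n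
      · subst hjk
        simp only [if_true]
        rw [smul_smul, Finset.prod_Icc_succ_top (Nat.le_add_left 1 j)]
        push_cast
        ring_nf
      · rw [if_neg hjk, if_neg (by omega), smul_zero]
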